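/- arXiv:1501.04216 — 2 statements merged into one kernel-verified Lean document; each statement's English description precedes it below -/
import Mathlib

section
/- Every matrix r ∈ SO(3) whose characteristic polynomial is (x² − (4 − 2√2)x + 1)(x − 1) has infinite order in SO(3). -/
/-- `SO(3)`: the subgroup of the real orthogonal group `O(3)` of matrices of determinant 1. -/
def SO3 : Subgroup (Matrix.unitaryGroup (Fin 3) ℝ) where
  carrier := {A | (A : Matrix (Fin 3) (Fin 3) ℝ).det = 1}
  one_mem' := by simp
  mul_mem' := by
    intro a b ha hb
    simp only [Set.mem_setOf_eq, Matrix.UnitaryGroup.mul_val, Matrix.det_mul] at *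
    rw [ha, hb, one_mul]
  inv_mem' := by
    intro a ha
    simp only [Set.mem_setOf_eq, Matrix.UnitaryGroup.inv_val] at *
    rw [Matrix.star_eq_conjTranspose, Matrix.conjTranspose_eq_transpose_of_trivial,
      Matrix.det_transpose]
    exact ha

/-- Integer pair sequence tracking `λ^k + conj λ^k = a_k + b_k √2`. -/
def abSeq : ℕ → ℤ × ℤ
  | 0 => (2, 0)
  | 1 => (4, -2)
  | (k + 2) =>
      ((4 * (abSeq (k+1)).1 - 4 * (abSeq (k+1)).2 - (abSeq k).1),
       (4 * (abSeq (k+1)).2 - 2 * (abSeq (k+1)).1 - (abSeq k).2))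

lemma abSeq_spec (z w : ℂ) (hsum : z + w = ((4 - 2 * Real.sqrt 2 : ℝ) : ℂ))
    (hprod : z * w = 1) (k : ℕ) :
    z ^ k + w ^ k = ((abSeq k).1 : ℂ) + ((abSeq k).2 : ℂ) * (Real.sqrt 2 : ℝ) := by
  have hs2 : ((Real.sqrt 2 : ℝ) : ℂ) * ((Real.sqrt 2 : ℝ) : ℂ) = 2 := by
    rw [← Complex.ofReal_mul, Real.mul_self_sqrt (by norm_num : (0:ℝ) ≤ 2)]
    norm_num
  induction k using Nat.twoStepInduction with
  | zero => norm_num [abSeq]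
  | one =>
      simp only [abSeq, pow_one]
      rw [hsum]
      push_cast
      ring
  | more k ih2 ih1 =>
      have key : z ^ (k + 2) + w ^ (k + 2)
          = (z + w) * (z ^ (k+1) + w ^ (k+1)) - (z * w) * (z ^ k + w ^ k) := by ring
      rw [key, hsum, hprod, one_mul, ih1, ih2]
      show _ = ((abSeq (k+2)).1 : ℂ) + ((abSeq (k+2)).2 : ℂ) * (Real.sqrt 2 : ℝ)
      simp only [abSeq]
      push_cast
      linear_combination (-2 * ((abSeq (k+1)).2 : ℂ)) * hs2

/-- The Galois-conjugate value `a_k - b_k √2`. -/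
noncomputable def wSeq (k : ℕ) : ℝ := ((abSeq k).1 : ℝ) - ((abSeq k).2 : ℝ) * Real.sqrt 2

lemma wSeq_rec (k : ℕ) : wSeq (k + 2) = (4 + 2 * Real.sqrt 2) * wSeq (k+1) - wSeq k := by
  have hs2 : Real.sqrt 2 * Real.sqrt 2 = 2 := Real.mul_self_sqrt (by norm_num)
  simp only [wSeq, abSeq]
  push_cast
  linear_combination (2 * ((abSeq (k+1)).2 : ℝ)) * hs2

lemma wSeq_growth : ∀ k, 2 ≤ wSeq k ∧ wSeq k + 2 ≤ wSeq (k + 1) := by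
  have hs0 : (0:ℝ) ≤ Real.sqrt 2 := Real.sqrt_nonneg 2
  intro k
  induction k with
  | zero =>
      constructor
      · simp [wSeq, abSeq]
      · simp only [wSeq, abSeq]
        push_cast
        nlinarith
  | succ k ih =>
      obtain ⟨h1, h2⟩ := ih
      have h3 : 2 ≤ wSeq (k + 1) := by linarith
      refine ⟨h3, ?_⟩
      rw [wSeq_rec]
      nlinarith

open Polynomial in
theorem infinite_order_of_charpoly'
    (M : Matrix (Fin 3) (Fin 3) ℝ)
    (hr : M.charpoly = (X ^ 2 - C (4 - 2 * Real.sqrt 2) * X + 1) * (X - 1))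
    (n : ℕ) (hn : 0 < n) (hMn : M ^ n = 1) : False := by
  have hs0 : (0:ℝ) ≤ Real.sqrt 2 := Real.sqrt_nonneg 2
  have hs2 : Real.sqrt 2 * Real.sqrt 2 = 2 := Real.mul_self_sqrt (by norm_num)
  have hsle : Real.sqrt 2 ≤ 2 := by nlinarith
  have hsge : 1 ≤ Real.sqrt 2 := by nlinarith
  set c : ℝ := 4 - 2 * Real.sqrt 2 with hc
  have hc0 : 0 ≤ c := by simp only [hc]; linarith
  have hc2 : c ≤ 2 := by simp only [hc]; linarith
  -- the complex matrix
  set N : Matrix (Fin 3) (Fin 3) ℂ := M.map (algebraMap ℝ ℂ) with hN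
  have hNn : N ^ n = 1 := by
    have := congrArg (algebraMap ℝ ℂ).mapMatrix hMn
    rw [map_pow, map_one] at this
    rw [hN, ← RingHom.mapMatrix_apply, this]
  -- the eigenvalue
  set s : ℝ := Real.sqrt (4 - c ^ 2) with hs
  have hss : s * s = 4 - c ^ 2 := Real.mul_self_sqrt (by nlinarith)
  set lam : ℂ := ⟨c / 2, s / 2⟩ with hlam
  have hsum : lam + (starRingEnd ℂ) lam = (c : ℂ) := by
    rw [Complex.add_conj]
    simp only [hlam]
    push_cast
    ring
  have hprod : lam * (starRingEnd ℂ) lam = 1 := by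
    rw [Complex.mul_conj]
    have : Complex.normSq lam = 1 := by
      simp only [Complex.normSq_mk, hlam]
      nlinarith
    rw [this]
    norm_num
  -- lam is a root of the charpoly of N
  have hroot : eval lam N.charpoly = 0 := by
    rw [hN, Matrix.charpoly_map, hr]
    have h1 : lam ^ 2 - (c:ℂ) * lam + 1 = 0 := by
      rw [← hsum, ← hprod]; ring
    simp only [Polynomial.map_mul, Polynomial.map_add, Polynomial.map_sub, Polynomial.map_pow,
      Polynomial.map_one, map_X, map_C, eval_mul, eval_add, eval_sub, eval_pow, eval_one, eval_X,
      eval_C]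
    rw [Complex.coe_algebraMap] at *
    rw [show ((4 - 2 * Real.sqrt 2 : ℝ) : ℂ) = (c:ℂ) by norm_num [hc]]
    rw [h1, zero_mul]
  -- eigenvector
  have hdet : (lam • (1 : Matrix (Fin 3) (Fin 3) ℂ) - N).det = 0 := by
    have := RingHom.map_det (evalRingHom lam) (Matrix.charmatrix N)
    rw [← Matrix.charpoly] at this
    have hmap : (Matrix.charmatrix N).map (evalRingHom lam)
        = lam • (1 : Matrix (Fin 3) (Fin 3) ℂ) - N := by
      ext i j
      by_cases hij : i = j
      · subst hij
        simp [Matrix.charmatrix_apply_eq, Matrix.one_apply]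
      · simp [Matrix.charmatrix_apply_ne _ _ _ hij, Matrix.one_apply, hij]
    rw [RingHom.mapMatrix_apply, hmap] at this
    rw [← this]
    simpa using hroot
  obtain ⟨v, hv0, hv⟩ := (Matrix.exists_mulVec_eq_zero_iff).mpr hdet
  have heig : N.mulVec v = lam • v := by
    have h := hv
    rw [Matrix.sub_mulVec, Matrix.smul_mulVec, Matrix.one_mulVec, sub_eq_zero] at h
    exact h.symm
  have hpow : ∀ k, (N ^ k).mulVec v = lam ^ k • v := by
    intro k
    induction k with
    | zero => simp
    | succ k ih =>
        rw [pow_succ', ← Matrix.mulVec_mulVec, ih, Matrix.mulVec_smul, heig, pow_succ',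
          smul_smul, mul_comm]
  have hlamn : lam ^ n = 1 := by
    have h1 : (N ^ n).mulVec v = v := by rw [hNn, Matrix.one_mulVec]
    rw [hpow n] at h1
    by_contra hne
    obtain ⟨i, hi⟩ := Function.ne_iff.mp hv0
    have := congrFun h1 i
    simp only [Pi.smul_apply, smul_eq_mul] at this
    have : (lam ^ n - 1) * v i = 0 := by rw [sub_mul, this, one_mul, sub_self]
    rcases mul_eq_zero.mp this with h | h
    · exact hne (by linear_combination h)
    · exact hi h
  -- now the arithmetic contradiction
  have hconj : ((starRingEnd ℂ) lam) ^ n = 1 := by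
    rw [← map_pow, hlamn, map_one]
  have hspec := abSeq_spec lam ((starRingEnd ℂ) lam) (by rw [hsum]) hprod n
  rw [hlamn, hconj] at hspec
  have hreal : ((abSeq n).1 : ℝ) + ((abSeq n).2 : ℝ) * Real.sqrt 2 = 2 := by
    have : (((((abSeq n).1 : ℝ) + ((abSeq n).2 : ℝ) * Real.sqrt 2) : ℝ) : ℂ) = ((2:ℝ) : ℂ) := by
      push_cast
      rw [← hspec]
      norm_num
    exact_mod_cast this
  have hb : (abSeq n).2 = 0 := by
    by_contra hb
    apply irrational_sqrt_two
    refine ⟨(2 - (abSeq n).1 : ℚ) / ((abSeq n).2 : ℚ), ?_⟩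
    have hbR : ((abSeq n).2 : ℝ) ≠ 0 := Int.cast_ne_zero.mpr hb
    push_cast
    field_simp
    linarith
  have ha : ((abSeq n).1 : ℝ) = 2 := by
    rw [hb] at hreal
    push_cast at hreal
    linarith
  have hw : wSeq n = 2 := by
    simp [wSeq, hb, ha]
  obtain ⟨m, rfl⟩ : ∃ m, n = m + 1 := ⟨n - 1, by omega⟩
  have h1 := (wSeq_growth m).1
  have h2 := (wSeq_growth m).2
  linarith [hw ▸ h2, h1]

open Polynomial in
/-- Every `r ∈ SO(3)` whose characteristic polynomial is
`(x² − (4 − 2√2)x + 1)(x − 1)` has infinite order. -/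
theorem infinite_order_of_charpoly
    (r : SO3)
    (hr : ((r : Matrix.unitaryGroup (Fin 3) ℝ) : Matrix (Fin 3) (Fin 3) ℝ).charpoly =
      (X ^ 2 - C (4 - 2 * Real.sqrt 2) * X + 1) * (X - 1)) :
    ¬ IsOfFinOrder r := by
  intro hfin
  obtain ⟨n, hn, hrn⟩ := isOfFinOrder_iff_pow_eq_one.mp hfin
  apply infinite_order_of_charpoly' _ hr n hn
  have h1 : ((r : Matrix.unitaryGroup (Fin 3) ℝ) : Matrix (Fin 3) (Fin 3) ℝ) ^ n
      = (((r ^ n : SO3) : Matrix.unitaryGroup (Fin 3) ℝ) : Matrix (Fin 3) (Fin 3) ℝ) := by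
    push_cast
    rfl
  rw [h1, hrn]
  rfl
end

section
/- In G = SL(2,ℝ), let Γ = SL(2,ℤ) and let H be the subgroup of diagonal matrices in SL(2,ℝ). Then the set HΓ is closed in G, yet Γ ∩ H = {diag(1,1), diag(−1,−1)} is finite and hence is not a lattice in the noncompact group H. Thus for a non-normal closed subgroup H and a non-uniform lattice Γ, HΓ can be closed while H fails to be Γ-hereditary. -/
open scoped Pointwise

open MeasureTheory in
/-- A lattice in a topological group: a discrete subgroup with finite invariant covolume. -/
def IsLattice {G : Type*} [Group G] [TopologicalSpace G] (Γ : Subgroup G) : Prop :=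
  DiscreteTopology Γ ∧
    letI : MeasurableSpace (G ⧸ Γ) := borel (G ⧸ Γ)
    ∃ μ : Measure (G ⧸ Γ), SMulInvariantMeasure G (G ⧸ Γ) μ ∧ μ ≠ 0 ∧ IsFiniteMeasure μ

instance : TopologicalSpace (Matrix.SpecialLinearGroup (Fin 2) ℝ) :=
  inferInstanceAs (TopologicalSpace {A : Matrix (Fin 2) (Fin 2) ℝ // A.det = 1})

/-- The subgroup of diagonal matrices in `SL(2,ℝ)`. -/
def DiagSL : Subgroup (Matrix.SpecialLinearGroup (Fin 2) ℝ) where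
  carrier := {A | Matrix.IsDiag (A : Matrix (Fin 2) (Fin 2) ℝ)}
  one_mem' := by
    simpa using Matrix.isDiag_one
  mul_mem' := by
    intro a b ha hb
    simp only [Set.mem_setOf_eq, Matrix.SpecialLinearGroup.coe_mul] at *
    intro i j hij
    rw [Matrix.mul_apply]
    refine Finset.sum_eq_zero fun k _ => ?_
    rcases eq_or_ne i k with rfl | hik
    · rw [hb hij, mul_zero]
    · rw [ha hik, zero_mul]
  inv_mem' := by
    intro a ha
    simp only [Set.mem_setOf_eq] at *
    rw [Matrix.SpecialLinearGroup.coe_inv, Matrix.adjugate_fin_two]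
    intro i j hij
    fin_cases i <;> fin_cases j <;>
      simp_all [ha (show (0 : Fin 2) ≠ 1 by decide), ha (show (1 : Fin 2) ≠ 0 by decide)]

/-- The image of `SL(2,ℤ)` in `SL(2,ℝ)`. -/
def SL2Z : Subgroup (Matrix.SpecialLinearGroup (Fin 2) ℝ) :=
  (Matrix.SpecialLinearGroup.map (n := Fin 2) (Int.castRingHom ℝ)).range

/-- `-1` as an element of `SL(2,ℝ)`. -/
def negOneSL : Matrix.SpecialLinearGroup (Fin 2) ℝ :=
  ⟨-1, by rw [Matrix.det_neg]; simp⟩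


section Aux

open Filter Topology MeasureTheory

instance : SequentialSpace (Matrix (Fin 2) (Fin 2) ℝ) :=
  inferInstanceAs (SequentialSpace (Fin 2 → Fin 2 → ℝ))


/-- integer sequences converging in ℝ are eventually constant -/
lemma int_seq_const {z : ℕ → ℤ} {L : ℝ}
    (h : Tendsto (fun n => (z n : ℝ)) atTop (𝓝 L)) :
    ∃ m : ℤ, L = (m : ℝ) ∧ ∀ᶠ n in atTop, z n = m := by
  have hev : ∀ᶠ n in atTop, (z n : ℝ) ∈ Metric.ball L (1/2) :=
    h.eventually (Metric.ball_mem_nhds L (by norm_num))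
  obtain ⟨N, hN⟩ := eventually_atTop.mp hev
  have hconst : ∀ n ≥ N, z n = z N := by
    intro n hn
    have h1 := hN n hn
    have h2 := hN N le_rfl
    simp only [Metric.mem_ball, Real.dist_eq] at h1 h2
    by_contra hne
    have hge : (1 : ℤ) ≤ |z n - z N| := Int.one_le_abs (sub_ne_zero.mpr hne)
    have hge' : (1 : ℝ) ≤ |(z n : ℝ) - (z N : ℝ)| := by
      have : ((1:ℤ):ℝ) ≤ ((|z n - z N| : ℤ) : ℝ) := Int.cast_le.mpr hge
      push_cast at this
      linarith [this]
    have htri : |(z n : ℝ) - (z N : ℝ)| ≤ |(z n : ℝ) - L| + |L - (z N : ℝ)| :=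
      abs_sub_le _ _ _
    rw [abs_sub_comm L _] at htri
    linarith
  refine ⟨z N, ?_, eventually_atTop.mpr ⟨N, hconst⟩⟩
  have hlim2 : Tendsto (fun n => (z n : ℝ)) atTop (𝓝 ((z N : ℤ) : ℝ)) := by
    refine Tendsto.congr' ?_ tendsto_const_nhds
    filter_upwards [eventually_ge_atTop N] with n hn
    rw [hconst n hn]
  exact tendsto_nhds_unique h hlim2

lemma cont00 : Continuous (fun A : Matrix.SpecialLinearGroup (Fin 2) ℝ =>
    (A : Matrix (Fin 2) (Fin 2) ℝ) 0 0) := by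
  have h1 : Continuous (Subtype.val : {A : Matrix (Fin 2) (Fin 2) ℝ // A.det = 1} →
      Matrix (Fin 2) (Fin 2) ℝ) := continuous_subtype_val
  exact (continuous_apply (0 : Fin 2)).comp ((continuous_apply (0 : Fin 2)).comp h1)


noncomputable def diagT (t : ℝ) (ht : t ≠ 0) : Matrix.SpecialLinearGroup (Fin 2) ℝ :=
  ⟨Matrix.diagonal ![t, t⁻¹], by
    simp [Matrix.det_diagonal, Fin.prod_univ_two, mul_inv_cancel₀ ht]⟩

lemma diagT_mem (t : ℝ) (ht : t ≠ 0) (H : Subgroup (Matrix.SpecialLinearGroup (Fin 2) ℝ))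
    (hH : ∀ A, A ∈ H ↔ Matrix.IsDiag (A : Matrix (Fin 2) (Fin 2) ℝ)) :
    diagT t ht ∈ H := (hH _).mpr (Matrix.isDiag_diagonal _)


def MS : Set (Matrix (Fin 2) (Fin 2) ℝ) :=
  {X | ∃ t : ℝ, ∃ B : Matrix (Fin 2) (Fin 2) ℤ, 0 < t ∧ B.det = 1 ∧
    ∀ j, X 0 j = t * (B 0 j : ℝ) ∧ X 1 j = t⁻¹ * (B 1 j : ℝ)}

lemma row_ex (B : Matrix (Fin 2) (Fin 2) ℤ) (hdet : B.det = 1) (i : Fin 2) :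
    ∃ j, B i j ≠ 0 := by
  by_contra hc
  push_neg at hc
  rw [Matrix.det_fin_two] at hdet
  fin_cases i <;> simp_all [hc]

lemma MS_isSeqClosed : IsSeqClosed MS := by
  intro Xs X hmem hlim
  choose t B ht hdet hEq using hmem
  -- entrywise limits
  have hent : ∀ i j, Tendsto (fun n => Xs n i j) atTop (𝓝 (X i j)) := by
    intro i j
    have h1 := tendsto_pi_nhds.mp hlim i
    exact tendsto_pi_nhds.mp h1 j
  -- bound
  have hbdd : ∃ K : ℝ, 1 ≤ K ∧ ∀ n i j, |Xs n i j| ≤ K := by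
    have h : ∀ i j, ∃ C : ℝ, ∀ n, |Xs n i j| ≤ C := by
      intro i j
      obtain ⟨C, hC⟩ := ((hent i j).abs).bddAbove_range
      exact ⟨C, fun n => hC ⟨n, rfl⟩⟩
    obtain ⟨C00, h00⟩ := h 0 0; obtain ⟨C01, h01⟩ := h 0 1
    obtain ⟨C10, h10⟩ := h 1 0; obtain ⟨C11, h11⟩ := h 1 1
    refine ⟨max 1 (max (max C00 C01) (max C10 C11)), le_max_left _ _, fun n i j => ?_⟩
    fin_cases i <;> fin_cases j
    · exact le_trans (h00 n) (by simp [le_max_iff, le_refl])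
    · exact le_trans (h01 n) (by simp [le_max_iff, le_refl])
    · exact le_trans (h10 n) (by simp [le_max_iff, le_refl])
    · exact le_trans (h11 n) (by simp [le_max_iff, le_refl])
  obtain ⟨K, hK1, hK⟩ := hbdd
  have hK0 : (0:ℝ) < K := lt_of_lt_of_le one_pos hK1
  -- t n ∈ [K⁻¹, K]
  have htK : ∀ n, t n ∈ Set.Icc K⁻¹ K := by
    intro n
    constructor
    · -- lower bound from row 1
      obtain ⟨j, hj⟩ := row_ex (B n) (hdet n) 1
      have h1 : (1:ℝ) ≤ |(B n 1 j : ℝ)| := by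
        have := Int.one_le_abs hj
        have : ((1:ℤ):ℝ) ≤ ((|B n 1 j| : ℤ) : ℝ) := Int.cast_le.mpr this
        push_cast at this; linarith
      have h2 : |Xs n 1 j| = (t n)⁻¹ * |(B n 1 j : ℝ)| := by
        rw [(hEq n j).2, abs_mul, abs_of_pos (inv_pos.mpr (ht n))]
      have h3 : (t n)⁻¹ ≤ K := by
        have := hK n 1 j
        rw [h2] at this
        nlinarith [inv_pos.mpr (ht n)]
      calc K⁻¹ ≤ ((t n)⁻¹)⁻¹ := by
            apply inv_anti₀ (inv_pos.mpr (ht n)) h3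
        _ = t n := inv_inv _
    · -- upper bound from row 0
      obtain ⟨j, hj⟩ := row_ex (B n) (hdet n) 0
      have h1 : (1:ℝ) ≤ |(B n 0 j : ℝ)| := by
        have := Int.one_le_abs hj
        have : ((1:ℤ):ℝ) ≤ ((|B n 0 j| : ℤ) : ℝ) := Int.cast_le.mpr this
        push_cast at this; linarith
      have h2 : |Xs n 0 j| = t n * |(B n 0 j : ℝ)| := by
        rw [(hEq n j).1, abs_mul, abs_of_pos (ht n)]
      have := hK n 0 j
      rw [h2] at this
      nlinarith [ht n]
  -- extract convergent subsequence of t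
  obtain ⟨t₀, ht₀mem, φ, hφ, htlim⟩ :=
    (isCompact_Icc (a := K⁻¹) (b := K)).tendsto_subseq htK
  have ht₀ : 0 < t₀ := lt_of_lt_of_le (inv_pos.mpr hK0) ht₀mem.1
  -- B entries converge along φ
  have hB0 : ∀ j, Tendsto (fun n => (B (φ n) 0 j : ℝ)) atTop (𝓝 (t₀⁻¹ * X 0 j)) := by
    intro j
    have h1 : ∀ n, (B (φ n) 0 j : ℝ) = (t (φ n))⁻¹ * Xs (φ n) 0 j := by
      intro n
      rw [(hEq (φ n) j).1, inv_mul_cancel_left₀ (ht (φ n)).ne']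
    have h2 : Tendsto (fun n => (t (φ n))⁻¹ * Xs (φ n) 0 j) atTop (𝓝 (t₀⁻¹ * X 0 j)) :=
      (htlim.inv₀ ht₀.ne').mul ((hent 0 j).comp hφ.tendsto_atTop)
    exact h2.congr (fun n => (h1 n).symm)
  have hB1 : ∀ j, Tendsto (fun n => (B (φ n) 1 j : ℝ)) atTop (𝓝 (t₀ * X 1 j)) := by
    intro j
    have h1 : ∀ n, (B (φ n) 1 j : ℝ) = t (φ n) * Xs (φ n) 1 j := by
      intro n
      rw [(hEq (φ n) j).2, mul_inv_cancel_left₀ (ht (φ n)).ne']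
    have h2 : Tendsto (fun n => t (φ n) * Xs (φ n) 1 j) atTop (𝓝 (t₀ * X 1 j)) :=
      htlim.mul ((hent 1 j).comp hφ.tendsto_atTop)
    exact h2.congr (fun n => (h1 n).symm)
  obtain ⟨m00, hm00, he00⟩ := int_seq_const (hB0 0)
  obtain ⟨m01, hm01, he01⟩ := int_seq_const (hB0 1)
  obtain ⟨m10, hm10, he10⟩ := int_seq_const (hB1 0)
  obtain ⟨m11, hm11, he11⟩ := int_seq_const (hB1 1)
  -- the limit integer matrix
  set C : Matrix (Fin 2) (Fin 2) ℤ := Matrix.of ![![m00, m01], ![m10, m11]] with hC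
  have hCdet : C.det = 1 := by
    obtain ⟨n, hn00, hn01, hn10, hn11⟩ :=
      (he00.and (he01.and (he10.and he11))).exists
    have hd := hdet (φ n)
    rw [Matrix.det_fin_two] at hd
    rw [Matrix.det_fin_two]
    show (m00 * m11 - m01 * m10 : ℤ) = 1
    rw [← hn00, ← hn01, ← hn10, ← hn11]
    exact hd
  refine ⟨t₀, C, ht₀, hCdet, fun j => ⟨?_, ?_⟩⟩ <;> fin_cases j
  · show X 0 0 = t₀ * ((m00 : ℤ) : ℝ)
    rw [← hm00, mul_inv_cancel_left₀ ht₀.ne']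
  · show X 0 1 = t₀ * ((m01 : ℤ) : ℝ)
    rw [← hm01, mul_inv_cancel_left₀ ht₀.ne']
  · show X 1 0 = t₀⁻¹ * ((m10 : ℤ) : ℝ)
    rw [← hm10, inv_mul_cancel_left₀ ht₀.ne']
  · show X 1 1 = t₀⁻¹ * ((m11 : ℤ) : ℝ)
    rw [← hm11, inv_mul_cancel_left₀ ht₀.ne']

lemma inter_eq :
    ((SL2Z ⊓ DiagSL : Subgroup _) : Set (Matrix.SpecialLinearGroup (Fin 2) ℝ)) =
      {1, negOneSL} := by
  ext x
  simp only [SetLike.mem_coe, Subgroup.mem_inf, Set.mem_insert_iff, Set.mem_singleton_iff]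
  constructor
  · rintro ⟨⟨γ, rfl⟩, hd⟩
    have hd' : Matrix.IsDiag ((Matrix.SpecialLinearGroup.map (Int.castRingHom ℝ) γ :
        Matrix.SpecialLinearGroup (Fin 2) ℝ) : Matrix (Fin 2) (Fin 2) ℝ) := hd
    rw [Matrix.SpecialLinearGroup.map_apply_coe] at hd'
    have h01 : (γ : Matrix (Fin 2) (Fin 2) ℤ) 0 1 = 0 := by
      have := hd' (show (0 : Fin 2) ≠ 1 by decide)
      simpa using this
    have h10 : (γ : Matrix (Fin 2) (Fin 2) ℤ) 1 0 = 0 := by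
      have := hd' (show (1 : Fin 2) ≠ 0 by decide)
      simpa using this
    have hdet := γ.2
    rw [Matrix.det_fin_two, h01, h10] at hdet
    simp only [mul_zero, sub_zero] at hdet
    rcases Int.mul_eq_one_iff_eq_one_or_neg_one.mp hdet with ⟨ha, hb⟩ | ⟨ha, hb⟩
    · left
      apply Subtype.ext
      rw [Matrix.SpecialLinearGroup.map_apply_coe]
      ext i j
      fin_cases i <;> fin_cases j <;>
        simp [ha, hb, h01, h10, Matrix.one_apply]
    · right
      apply Subtype.ext
      rw [Matrix.SpecialLinearGroup.map_apply_coe]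
      show _ = (-1 : Matrix (Fin 2) (Fin 2) ℝ)
      ext i j
      fin_cases i <;> fin_cases j <;>
        simp [ha, hb, h01, h10, Matrix.one_apply]
  · rintro (rfl | rfl)
    · exact ⟨one_mem _, one_mem _⟩
    · constructor
      · refine ⟨⟨-1, by rw [Matrix.det_neg]; simp⟩, ?_⟩
        apply Subtype.ext
        erw [Matrix.SpecialLinearGroup.map_apply_coe]
        show _ = (-1 : Matrix (Fin 2) (Fin 2) ℝ)
        ext i j
        fin_cases i <;> fin_cases j <;> simp [Matrix.one_apply]
      · show Matrix.IsDiag ((negOneSL : Matrix.SpecialLinearGroup (Fin 2) ℝ) : Matrix (Fin 2) (Fin 2) ℝ)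
        intro i j hij
        show (-1 : Matrix (Fin 2) (Fin 2) ℝ) i j = 0
        fin_cases i <;> fin_cases j <;> simp_all [Matrix.one_apply]

lemma prod_eq : ((DiagSL : Set (Matrix.SpecialLinearGroup (Fin 2) ℝ)) * (SL2Z : Set _)) =
    (fun A : Matrix.SpecialLinearGroup (Fin 2) ℝ => (A : Matrix (Fin 2) (Fin 2) ℝ)) ⁻¹' MS := by
  ext A
  constructor
  · rintro ⟨h, hh, g, hg, rfl⟩
    obtain ⟨γ, rfl⟩ := hg
    have hh' : Matrix.IsDiag (h : Matrix (Fin 2) (Fin 2) ℝ) := hh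
    have h01 : (h : Matrix (Fin 2) (Fin 2) ℝ) 0 1 = 0 := hh' (by decide)
    have h10 : (h : Matrix (Fin 2) (Fin 2) ℝ) 1 0 = 0 := hh' (by decide)
    have hdet := h.2
    rw [Matrix.det_fin_two, h01, h10] at hdet
    simp only [mul_zero, sub_zero] at hdet
    set u := (h : Matrix (Fin 2) (Fin 2) ℝ) 0 0 with hu
    have hu0 : u ≠ 0 := by
      intro h0; rw [h0, zero_mul] at hdet; exact one_ne_zero hdet.symm
    have h11 : (h : Matrix (Fin 2) (Fin 2) ℝ) 1 1 = u⁻¹ :=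
      eq_inv_of_mul_eq_one_left (by rw [mul_comm]; exact hdet)
    have hentry : ∀ i j, ((h * Matrix.SpecialLinearGroup.map (Int.castRingHom ℝ) γ :
        Matrix.SpecialLinearGroup (Fin 2) ℝ) : Matrix (Fin 2) (Fin 2) ℝ) i j =
        (h : Matrix (Fin 2) (Fin 2) ℝ) i i * ((γ : Matrix (Fin 2) (Fin 2) ℤ) i j : ℝ) := by
      intro i j
      rw [Matrix.SpecialLinearGroup.coe_mul, Matrix.mul_apply, Fin.sum_univ_two,
        Matrix.SpecialLinearGroup.map_apply_coe]
      fin_cases i <;> simp [h01, h10, Matrix.map_apply]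
    show _ ∈ MS
    rcases lt_or_gt_of_ne hu0 with hneg | hpos
    · refine ⟨-u, -(γ : Matrix (Fin 2) (Fin 2) ℤ), by linarith, ?_, fun j => ⟨?_, ?_⟩⟩
      · rw [Matrix.det_neg]; simp [γ.2]
      · rw [hentry 0 j, Matrix.neg_apply]; push_cast; ring
      · rw [hentry 1 j, h11, Matrix.neg_apply, inv_neg]; push_cast; ring
    · refine ⟨u, (γ : Matrix (Fin 2) (Fin 2) ℤ), hpos, γ.2, fun j => ⟨?_, ?_⟩⟩
      · rw [hentry 0 j]
      · rw [hentry 1 j, h11]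
  · intro hA
    obtain ⟨t, B, ht, hdet, hEq⟩ := hA
    simp only [] at hEq
    have hdiag : (Matrix.diagonal ![t, t⁻¹]).det = 1 := by
      simp [Matrix.det_diagonal, Fin.prod_univ_two, mul_inv_cancel₀ ht.ne']
    set h : Matrix.SpecialLinearGroup (Fin 2) ℝ := ⟨Matrix.diagonal ![t, t⁻¹], hdiag⟩ with hh
    set g : Matrix.SpecialLinearGroup (Fin 2) ℝ :=
      Matrix.SpecialLinearGroup.map (Int.castRingHom ℝ) ⟨B, hdet⟩ with hg
    have hhg : h * g = A := by
      apply Subtype.ext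
      rw [Matrix.SpecialLinearGroup.coe_mul]
      show Matrix.diagonal ![t, t⁻¹] * (Matrix.SpecialLinearGroup.map (Int.castRingHom ℝ)
        ⟨B, hdet⟩ : Matrix.SpecialLinearGroup (Fin 2) ℝ) = _
      erw [Matrix.SpecialLinearGroup.map_apply_coe]
      refine Matrix.ext ?_
      rw [Fin.forall_fin_two]
      constructor
      · intro j
        rw [Matrix.diagonal_mul, (hEq j).1]
        simp [Matrix.map_apply]
      · intro j
        rw [Matrix.diagonal_mul, (hEq j).2]
        simp [Matrix.map_apply]
    rw [← hhg]
    exact Set.mul_mem_mul (Matrix.isDiag_diagonal _) ⟨⟨B, hdet⟩, rfl⟩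

lemma not_compact :
    ¬ IsCompact (DiagSL : Set (Matrix.SpecialLinearGroup (Fin 2) ℝ)) := by
  intro hc
  obtain ⟨c, hbd⟩ := (hc.image cont00).bddAbove
  set t : ℝ := max c 0 + 1 with htdef
  have ht0 : (0:ℝ) < t := by positivity
  have hmem : t ∈ (fun A : Matrix.SpecialLinearGroup (Fin 2) ℝ =>
      (A : Matrix (Fin 2) (Fin 2) ℝ) 0 0) '' (DiagSL : Set _) := by
    refine ⟨diagT t ht0.ne', diagT_mem t ht0.ne' DiagSL (fun A => Iff.rfl), ?_⟩
    simp [diagT, Matrix.diagonal_apply_eq]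
  have := hbd hmem
  have : c < t := by
    calc c ≤ max c 0 := le_max_left _ _
    _ < t := by rw [htdef]; linarith
  linarith [hbd hmem]

lemma not_lattice
    (hinter : ((SL2Z ⊓ DiagSL : Subgroup _) : Set (Matrix.SpecialLinearGroup (Fin 2) ℝ)) =
      {1, negOneSL}) :
    ¬ IsLattice (SL2Z.subgroupOf DiagSL) := by
  set Γ' := SL2Z.subgroupOf DiagSL with hΓ'
  set Q := DiagSL ⧸ Γ' with hQ
  -- the function f
  set f : DiagSL → ℝ := fun a => |((a : Matrix.SpecialLinearGroup (Fin 2) ℝ) :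
    Matrix (Fin 2) (Fin 2) ℝ) 0 0| with hf
  have hf_cont : Continuous f := (cont00.comp continuous_subtype_val).abs
  have hf_rel : ∀ a b : DiagSL, (QuotientGroup.leftRel Γ') a b → f a = f b := by
    intro a b hab
    rw [QuotientGroup.leftRel_apply] at hab
    have hx : ((a⁻¹ * b : DiagSL) : Matrix.SpecialLinearGroup (Fin 2) ℝ) ∈
        (SL2Z ⊓ DiagSL : Subgroup _) := by
      rw [Subgroup.mem_inf]
      exact ⟨(Subgroup.mem_subgroupOf).mp hab, (a⁻¹ * b).2⟩
    have hx' : ((a⁻¹ * b : DiagSL) : Matrix.SpecialLinearGroup (Fin 2) ℝ) ∈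
        ({1, negOneSL} : Set _) := by rw [← hinter]; exact hx
    have hb : (b : Matrix.SpecialLinearGroup (Fin 2) ℝ) =
        (a : Matrix.SpecialLinearGroup (Fin 2) ℝ) * ((a⁻¹ * b : DiagSL) :
          Matrix.SpecialLinearGroup (Fin 2) ℝ) := by
      push_cast
      rw [← mul_assoc, mul_inv_cancel, one_mul]
    rcases hx' with h1 | h1
    · rw [hf]
      simp only
      rw [hb, h1, mul_one]
    · rw [hf]
      simp only
      rw [hb, h1]
      show _ = |((a : Matrix.SpecialLinearGroup (Fin 2) ℝ) * negOneSL :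
        Matrix.SpecialLinearGroup (Fin 2) ℝ).val 0 0|
      rw [Matrix.SpecialLinearGroup.coe_mul]
      show _ = |((a : Matrix.SpecialLinearGroup (Fin 2) ℝ).val * (-1)) 0 0|
      rw [mul_neg_one, Matrix.neg_apply, abs_neg]
  -- descend to the quotient
  set F : Q → ℝ := fun q => Quotient.liftOn' q f hf_rel with hF
  have hF_cont : Continuous F := hf_cont.quotient_liftOn' hf_rel
  have hF_mk : ∀ a : DiagSL, F (QuotientGroup.mk a) = f a := fun a => rfl
  have hFpos : ∀ q : Q, 0 < F q := by
    intro q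
    induction q using Quotient.inductionOn' with
    | h a =>
      have : F (QuotientGroup.mk a) = f a := hF_mk a
      rw [show (Quotient.mk'' a : Q) = QuotientGroup.mk a from rfl, this]
      rw [hf]
      simp only
      apply abs_pos.mpr
      intro h0
      have hdet := (a : Matrix.SpecialLinearGroup (Fin 2) ℝ).2
      have hdiag : Matrix.IsDiag ((a : Matrix.SpecialLinearGroup (Fin 2) ℝ) :
        Matrix (Fin 2) (Fin 2) ℝ) := a.2
      rw [Matrix.det_fin_two, h0, hdiag (show (0:Fin 2) ≠ 1 by decide)] at hdet
      simp at hdet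
  -- the expanding element
  have hdiag2 : (Matrix.diagonal ![(2:ℝ), 2⁻¹]).det = 1 := by
    simp [Matrix.det_diagonal, Fin.prod_univ_two]
  set gD : DiagSL := ⟨⟨Matrix.diagonal ![(2:ℝ), 2⁻¹], hdiag2⟩, Matrix.isDiag_diagonal _⟩
    with hgD
  have hFg : ∀ q : Q, F (gD • q) = 2 * F q := by
    intro q
    induction q using Quotient.inductionOn' with
    | h a =>
      show F (gD • (QuotientGroup.mk a : Q)) = 2 * F (QuotientGroup.mk a)
      have h1 : (gD • (QuotientGroup.mk a : Q)) = QuotientGroup.mk (gD * a) := rfl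
      rw [h1, hF_mk, hF_mk, hf]
      simp only
      show |((gD * a : DiagSL) : Matrix.SpecialLinearGroup (Fin 2) ℝ).val 0 0| = _
      push_cast
      rw [Matrix.SpecialLinearGroup.coe_mul]
      show |(Matrix.diagonal ![(2:ℝ), 2⁻¹] * ((a : Matrix.SpecialLinearGroup (Fin 2) ℝ) :
        Matrix (Fin 2) (Fin 2) ℝ)) 0 0| = _
      rw [Matrix.diagonal_mul]
      show |(2:ℝ) * _| = _
      rw [abs_mul, abs_two]
  -- now the measure-theoretic argument
  rintro ⟨-, μ, hinv, hne, hfin⟩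
  letI : MeasurableSpace Q := borel Q
  haveI : BorelSpace Q := ⟨rfl⟩
  set S : ℤ → Set Q := fun n => F ⁻¹' Set.Ico ((2:ℝ) ^ n) ((2:ℝ) ^ (n + 1)) with hS
  have hSm : ∀ n, MeasurableSet (S n) := fun n =>
    hF_cont.measurable measurableSet_Ico
  have hadj : ∀ n : ℤ, μ (S n) = μ (S (n + 1)) := by
    intro n
    have hpre : (fun x => gD • x) ⁻¹' S (n + 1) = S n := by
      ext x
      have e1 : (2:ℝ) ^ (n + 1) = 2 * 2 ^ n := by rw [zpow_add_one₀ two_ne_zero]; ring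
      have e2 : (2:ℝ) ^ (n + 1 + 1) = 2 * 2 ^ (n + 1) := by
        rw [zpow_add_one₀ two_ne_zero (a := (2:ℝ)) (n := n + 1)]; ring
      simp only [hS, Set.mem_preimage, Set.mem_Ico, hFg x]
      constructor
      · rintro ⟨hl, hr⟩
        exact ⟨by linarith, by linarith⟩
      · rintro ⟨hl, hr⟩
        exact ⟨by linarith, by linarith⟩
    rw [← hpre, hinv.measure_preimage_smul gD (hSm (n + 1))]
  have hconst : ∀ n : ℤ, μ (S n) = μ (S 0) := by
    intro n
    induction n using Int.induction_on with
    | zero => rfl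
    | succ k ih => rw [← ih, ← hadj]
    | pred k ih => rw [← ih, hadj (-(k:ℤ) - 1)]; norm_num
  have hcover : (⋃ n : ℤ, S n) = Set.univ := by
    ext q
    simp only [Set.mem_iUnion, Set.mem_univ, iff_true, hS, Set.mem_preimage]
    exact exists_mem_Ico_zpow (hFpos q) one_lt_two
  have hdisj : Pairwise (Function.onFun Disjoint S) := by
    intro m n hmn
    rw [Function.onFun, Set.disjoint_left]
    rintro q ⟨h1l, h1r⟩ ⟨h2l, h2r⟩
    rcases hmn.lt_or_gt with h | h
    · have : (2:ℝ) ^ (m+1) ≤ 2 ^ n := zpow_le_zpow_right₀ one_le_two (by omega)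
      linarith
    · have : (2:ℝ) ^ (n+1) ≤ 2 ^ m := zpow_le_zpow_right₀ one_le_two (by omega)
      linarith
  have htot : μ Set.univ = ∑' n : ℤ, μ (S n) := by
    rw [← hcover, measure_iUnion hdisj hSm]
  have hc0 : μ (S 0) = 0 := by
    by_contra hc
    have h1 : μ Set.univ = ⊤ := by
      rw [htot, tsum_congr hconst, ENNReal.tsum_const_eq_top_of_ne_zero hc]
    exact absurd h1 hfin.measure_univ_lt_top.ne
  have huniv : μ Set.univ = 0 := by
    rw [htot, tsum_congr hconst, hc0, tsum_zero]
  exact hne (Measure.measure_univ_eq_zero.mp huniv)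

end Aux

/-- In `G = SL(2,ℝ)` with `Γ = SL(2,ℤ)` and `H` the diagonal subgroup, the set `HΓ` is
closed, yet `Γ ∩ H = {±1}` is finite, hence not a lattice in the noncompact group `H`:
for a non-normal closed subgroup and a non-uniform lattice, `HΓ` can be closed while `H`
fails to be `Γ`-hereditary. -/
theorem diagonal_not_hereditary_in_SL2 :
    IsClosed ((DiagSL : Set (Matrix.SpecialLinearGroup (Fin 2) ℝ)) * (SL2Z : Set _)) ∧
      ((SL2Z ⊓ DiagSL : Subgroup _) : Set (Matrix.SpecialLinearGroup (Fin 2) ℝ)) =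
        {1, negOneSL} ∧
      Set.Finite ((SL2Z ⊓ DiagSL : Subgroup _) : Set (Matrix.SpecialLinearGroup (Fin 2) ℝ)) ∧
      ¬ IsCompact (DiagSL : Set (Matrix.SpecialLinearGroup (Fin 2) ℝ)) ∧
      ¬ IsLattice (SL2Z.subgroupOf DiagSL) := by
  refine ⟨?_, inter_eq, ?_, not_compact, not_lattice inter_eq⟩
  · rw [prod_eq]
    exact MS_isSeqClosed.isClosed.preimage
      (continuous_subtype_val : Continuous
        (Subtype.val : {A : Matrix (Fin 2) (Fin 2) ℝ // A.det = 1} → Matrix (Fin 2) (Fin 2) ℝ))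
  · rw [inter_eq]
    exact (Set.finite_singleton negOneSL).insert 1
end
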